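/- arXiv:1611.00981 — 5 statements merged into one kernel-verified Lean document; each statement's English description precedes it below -/
import Mathlib

section
/- Let l ≥ 2 and n ≥ 2l + 3, and let G be a simple graph on n vertices which is not isomorphic to K_{2l+3} ∪ M_{n-2l-3} and satisfies e(G) ≥ C(2l+3,2) + ⌊(n-2l-3)/2⌋. If G contains a cycle on 2l+2 vertices or a cycle on 2l+3 vertices, then G contains P_{2l+1} ∪ P_3, i.e. two vertex-disjoint paths on 2l+1 and 3 vertices respectively. -/
open SimpleGraph Finset

/-- The quantity `[n,m,l]` from the paper: if `n ≤ m-1` it is `C(n,2)`; otherwise, writing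
`n = (m-1) + t(l-1) + r` with `0 ≤ r < l-1`, it is `C(m-1,2) + t·C(l-1,2) + C(r,2)`. -/
def brkt3 (n m l : ℕ) : ℕ :=
  if n ≤ m - 1 then Nat.choose n 2
  else Nat.choose (m - 1) 2 + ((n - (m - 1)) / (l - 1)) * Nat.choose (l - 1) 2
      + Nat.choose ((n - (m - 1)) % (l - 1)) 2

/-- The quantity `[n,m]` from the paper: `C(⌊m/2⌋-1,2) + ⌊(m-2)/2⌋·(n - ⌊m/2⌋ + 1)`. -/
def brkt2 (n m : ℕ) : ℕ :=
  Nat.choose (m / 2 - 1) 2 + ((m - 2) / 2) * (n - m / 2 + 1)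

/-- The disjoint union of paths `P_{k 0} ∪ … ∪ P_{k (m-1)}`. -/
def pathUnion (m : ℕ) (k : Fin m → ℕ) : SimpleGraph (Σ i : Fin m, Fin (k i)) where
  Adj x y := x.1 = y.1 ∧ ((x.2 : ℕ) + 1 = (y.2 : ℕ) ∨ (y.2 : ℕ) + 1 = (x.2 : ℕ))
  symm := ⟨by rintro x y ⟨h1, h2⟩; exact ⟨h1.symm, h2.symm⟩⟩
  loopless := ⟨by rintro x ⟨-, h⟩; omega⟩

/-- `G` contains a copy of `H` as a subgraph. -/
def ContainsSub {V W : Type*} (G : SimpleGraph V) (H : SimpleGraph W) : Prop :=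
  ∃ f : W ↪ V, ∀ a b, H.Adj a b → G.Adj (f a) (f b)

/-- The Turán number `ex(n,H)`: the maximum number of edges of a simple graph on `n`
vertices containing no subgraph isomorphic to `H`. -/
noncomputable def exNum (n : ℕ) {W : Type*} (H : SimpleGraph W) : ℕ :=
  sSup {e : ℕ | ∃ G : SimpleGraph (Fin n), ¬ ContainsSub G H ∧ G.edgeSet.ncard = e}

/-- The connected Turán number `ex_con(n,H)`: the maximum number of edges of a connected
simple graph on `n` vertices containing no subgraph isomorphic to `H`. -/
noncomputable def exConNum (n : ℕ) {W : Type*} (H : SimpleGraph W) : ℕ :=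
  sSup {e : ℕ | ∃ G : SimpleGraph (Fin n),
    G.Connected ∧ ¬ ContainsSub G H ∧ G.edgeSet.ncard = e}

/-- The graph `K_m ∪ M_{n-m}` on `Fin n`: a complete graph on the first `m` vertices
together with a maximum matching on the remaining `n - m` vertices. -/
def compPlusMatching (n m : ℕ) : SimpleGraph (Fin n) where
  Adj a b := a ≠ b ∧
    (((a : ℕ) < m ∧ (b : ℕ) < m) ∨
     (m ≤ (a : ℕ) ∧ m ≤ (b : ℕ) ∧ ((a : ℕ) - m) / 2 = ((b : ℕ) - m) / 2))
  symm := ⟨by rintro a b ⟨h1, h2⟩; exact ⟨h1.symm, by tauto⟩⟩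
  loopless := ⟨by rintro a ⟨h, -⟩; exact h rfl⟩

/-- The graph `K_l + (K_2 ∪ K̄_{n-l-2})` on `Fin n`. -/
def joinK2Empty (n l : ℕ) : SimpleGraph (Fin n) where
  Adj a b := a ≠ b ∧ ((a : ℕ) < l ∨ (b : ℕ) < l ∨ ((a : ℕ) < l + 2 ∧ (b : ℕ) < l + 2))
  symm := ⟨by rintro a b ⟨h1, h2⟩; exact ⟨h1.symm, by tauto⟩⟩
  loopless := ⟨by rintro a ⟨h, -⟩; exact h rfl⟩

/- ===================== auxiliary development ===================== -/

lemma cycle_adj_iff {M : ℕ} (hM : 3 ≤ M) (u v : Fin M) :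
    (cycleGraph M).Adj u v ↔ ((u:ℕ)+1 = v ∨ (v:ℕ)+1 = u ∨
      ((u:ℕ) = M-1 ∧ (v:ℕ) = 0) ∨ ((v:ℕ) = M-1 ∧ (u:ℕ) = 0)) := by
  have hM0 : 0 < M := by omega
  have key : ∀ a b : Fin M, (a - b : Fin M).val = 1 ↔
      ((b:ℕ)+1 = a ∨ ((a:ℕ) = 0 ∧ (b:ℕ) = M-1)) := by
    intro a b
    rw [Fin.sub_def]
    simp only
    constructor
    · intro h
      have hd : M - (b:ℕ) + a = M * ((M - (b:ℕ) + a) / M) + 1 := by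
        conv_lhs => rw [← Nat.div_add_mod (M - (b:ℕ) + a) M]
        rw [h]
      have hq : (M - (b:ℕ) + a) / M < 2 := by
        rw [Nat.div_lt_iff_lt_mul hM0]
        have := a.isLt; have := b.isLt
        omega
      have ha' := a.isLt; have hb' := b.isLt
      generalize hg : (M - (b:ℕ) + (a:ℕ)) / M = q at hd hq
      have hq' : q = 0 ∨ q = 1 := by omega
      rcases hq' with h0 | h0 <;> subst h0 <;>
        [rw [Nat.mul_zero] at hd; rw [Nat.mul_one] at hd] <;> omega
    · intro h
      have := a.isLt; have := b.isLt
      rcases h with h | ⟨h1, h2⟩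
      · have : M - (b:ℕ) + a = M + 1 := by omega
        rw [this, Nat.add_mod_left, Nat.mod_eq_of_lt (by omega)]
      · have : M - (b:ℕ) + a = 1 := by omega
        rw [this, Nat.mod_eq_of_lt (by omega)]
  rw [cycleGraph_adj', key, key]
  omega

section cycfacts

variable {n m : ℕ} (G : SimpleGraph (Fin n))

/-- index function for a cycle: `i ↦ e (i mod m)` -/
def ccf (e : Fin m ↪ Fin n) (hm : 0 < m) : ℕ → Fin n :=
  fun i => e ⟨i % m, Nat.mod_lt _ hm⟩

variable (e : Fin m ↪ Fin n) (hm0 : 0 < m)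

lemma ccf_eq_iff (i j : ℕ) :
    ccf e hm0 i = ccf e hm0 j ↔ i % m = j % m := by
  unfold ccf
  constructor
  · intro h
    have := e.injective h
    simpa [Fin.ext_iff] using this
  · intro h; simp [h]

lemma ccf_shift_iff (s i j : ℕ) :
    ccf e hm0 (s+i) = ccf e hm0 (s+j) ↔ i % m = j % m := by
  rw [ccf_eq_iff e hm0]
  constructor
  · intro h
    exact Nat.ModEq.add_left_cancel' s h
  · intro h
    exact Nat.ModEq.add_left (c := s) h

lemma ccf_adj (hm : 3 ≤ m) (hadj : ∀ a b, (cycleGraph m).Adj a b → G.Adj (e a) (e b))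
    (i : ℕ) : G.Adj (ccf e hm0 i) (ccf e hm0 (i+1)) := by
  apply hadj
  rw [cycle_adj_iff hm]
  simp only
  have h1 : i % m < m := Nat.mod_lt _ (by omega)
  rcases Nat.lt_or_ge (i % m + 1) m with h | h
  · left
    rw [Nat.add_mod, Nat.mod_eq_of_lt (show 1 < m by omega), Nat.mod_eq_of_lt h]
  · right; right; left
    constructor
    · omega
    · rw [Nat.add_mod, Nat.mod_eq_of_lt (show 1 < m by omega)]
      have : i % m + 1 = m := by omega
      rw [this, Nat.mod_self]

end cycfacts

/-- a 3-vertex path function -/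
def bfun {n : ℕ} (b0 b1 b2 : Fin n) : ℕ → Fin n :=
  fun t => if t = 0 then b0 else if t = 1 then b1 else b2

lemma bfun_zero {n : ℕ} (b0 b1 b2 : Fin n) : bfun b0 b1 b2 0 = b0 := rfl
lemma bfun_one {n : ℕ} (b0 b1 b2 : Fin n) : bfun b0 b1 b2 1 = b1 := rfl
lemma bfun_two {n : ℕ} (b0 b1 b2 : Fin n) : bfun b0 b1 b2 2 = b2 := rfl

lemma bfun_inj {n : ℕ} {b0 b1 b2 : Fin n} (h01 : b0 ≠ b1) (h02 : b0 ≠ b2) (h12 : b1 ≠ b2) :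
    ∀ i j, i < 3 → j < 3 → bfun b0 b1 b2 i = bfun b0 b1 b2 j → i = j := by
  intro i j hi hj h
  unfold bfun at h
  interval_cases i <;> interval_cases j <;> simp_all

lemma bfun_adj {n : ℕ} (G : SimpleGraph (Fin n)) {b0 b1 b2 : Fin n}
    (h01 : G.Adj b0 b1) (h12 : G.Adj b1 b2) :
    ∀ i, i+1 < 3 → G.Adj (bfun b0 b1 b2 i) (bfun b0 b1 b2 (i+1)) := by
  intro i hi
  have hi2 : i < 2 := by omega
  interval_cases i <;> simpa [bfun]

lemma build_target {n l : ℕ} (G : SimpleGraph (Fin n)) (a b : ℕ → Fin n)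
    (hainj : ∀ i j, i < 2*l+1 → j < 2*l+1 → a i = a j → i = j)
    (hbinj : ∀ i j, i < 3 → j < 3 → b i = b j → i = j)
    (hadja : ∀ i, i+1 < 2*l+1 → G.Adj (a i) (a (i+1)))
    (hadjb : ∀ i, i+1 < 3 → G.Adj (b i) (b (i+1)))
    (hdisj : ∀ i j, i < 2*l+1 → j < 3 → a i ≠ b j) :
    ContainsSub G (pathUnion 2 ![2*l+1, 3]) := by
  have hlt : ∀ x : Σ i : Fin 2, Fin ((![2*l+1, 3] : Fin 2 → ℕ) i),
      (x.1 = 0 → (x.2 : ℕ) < 2*l+1) ∧ (x.1 = 1 → (x.2 : ℕ) < 3) := by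
    rintro ⟨i, j⟩
    constructor
    · rintro rfl; exact j.isLt
    · rintro rfl; exact j.isLt
  set f : (Σ i : Fin 2, Fin ((![2*l+1, 3] : Fin 2 → ℕ) i)) → Fin n :=
    fun x => if x.1 = 0 then a (x.2 : ℕ) else b (x.2 : ℕ) with hf
  have h01 : ∀ i : Fin 2, i = 0 ∨ i = 1 := by decide
  have finj : Function.Injective f := by
    rintro ⟨i, j⟩ ⟨i', j'⟩ h
    rcases h01 i with rfl | rfl <;> rcases h01 i' with rfl | rfl <;>
      simp only [hf, if_pos rfl, if_neg (by decide : (1 : Fin 2) ≠ 0), reduceIte] at h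
    · have := hainj _ _ ((hlt ⟨0, j⟩).1 rfl) ((hlt ⟨0, j'⟩).1 rfl) h
      simp only [Sigma.mk.inj_iff, heq_eq_eq, true_and]
      exact Fin.ext this
    · exact absurd h (hdisj _ _ ((hlt ⟨0, j⟩).1 rfl) ((hlt ⟨1, j'⟩).2 rfl))
    · exact absurd h.symm (hdisj _ _ ((hlt ⟨0, j'⟩).1 rfl) ((hlt ⟨1, j⟩).2 rfl))
    · have := hbinj _ _ ((hlt ⟨1, j⟩).2 rfl) ((hlt ⟨1, j'⟩).2 rfl) h
      simp only [Sigma.mk.inj_iff, heq_eq_eq, true_and]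
      exact Fin.ext this
  refine ⟨⟨f, finj⟩, ?_⟩
  rintro ⟨i, j⟩ ⟨i', j'⟩ ⟨h1, h2⟩
  dsimp at h1
  subst h1
  rcases h01 i with rfl | rfl <;>
    simp only [Function.Embedding.coeFn_mk, hf, if_pos rfl,
      if_neg (by decide : (1 : Fin 2) ≠ 0), reduceIte]
  · rcases h2 with h2 | h2
    · rw [← h2]; exact hadja _ (h2 ▸ (hlt ⟨0, j'⟩).1 rfl)
    · rw [← h2]; exact (hadja _ (h2 ▸ (hlt ⟨0, j⟩).1 rfl)).symm
  · rcases h2 with h2 | h2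
    · rw [← h2]; exact hadjb _ (h2 ▸ (hlt ⟨1, j'⟩).2 rfl)
    · rw [← h2]; exact (hadjb _ (h2 ▸ (hlt ⟨1, j⟩).2 rfl)).symm

section iso
variable {n m : ℕ} (G : SimpleGraph (Fin n)) [DecidableRel G.Adj]

/-- rank of v in S -/
private def rk (S : Finset (Fin n)) (v : Fin n) : ℕ := (S.filter (· < v)).card

private lemma rk_lt_card {S : Finset (Fin n)} {v : Fin n} (hv : v ∈ S) : rk S v < S.card := by
  apply Finset.card_lt_card
  refine ⟨Finset.filter_subset _ _, fun hsub => ?_⟩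
  have := hsub hv
  simp only [Finset.mem_filter] at this
  exact lt_irrefl v this.2

private lemma rk_strict {S : Finset (Fin n)} {u v : Fin n} (hu : u ∈ S) (hv : v ∈ S)
    (huv : u < v) : rk S u < rk S v := by
  apply Finset.card_lt_card
  constructor
  · intro a ha
    simp only [Finset.mem_filter] at ha ⊢
    exact ⟨ha.1, lt_trans ha.2 huv⟩
  · intro hsub
    have := hsub (by simp only [Finset.mem_filter]; exact ⟨hu, huv⟩)
    simp only [Finset.mem_filter] at this
    exact lt_irrefl u this.2

private lemma rk_inj {S : Finset (Fin n)} {u v : Fin n} (hu : u ∈ S) (hv : v ∈ S)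
    (h : rk S u = rk S v) : u = v := by
  rcases lt_trichotomy u v with h' | h' | h'
  · exact absurd h (Nat.ne_of_lt (rk_strict hu hv h'))
  · exact h'
  · exact absurd h.symm (Nat.ne_of_lt (rk_strict hv hu h'))

lemma iso_construct (C : Finset (Fin n)) (hCcard : C.card = m)
    (hclosed : ∀ u ∈ C, ∀ v, G.Adj u v → v ∈ C)
    (hdeg1 : ∀ v, v ∉ C → G.degree v ≤ 1)
    (hcount : m * (m - 1) + 2 * ((n - m)/2) ≤ ∑ v : Fin n, G.degree v) :
    Nonempty (G ≃g compPlusMatching n m) := by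
  classical
  have hmn : m ≤ n := by
    rw [← hCcard]
    simpa using Finset.card_le_univ C
  have hmlt : ∀ v : Fin n, v ∉ C → m < n := by
    intro v hv
    have : C ⊂ Finset.univ := by
      rw [Finset.ssubset_univ_iff]
      intro h; exact hv (h ▸ Finset.mem_univ v)
    have := Finset.card_lt_card this
    simpa [hCcard] using this
  set p : Fin n → Fin n := fun v =>
    if h : (G.neighborFinset v).Nonempty then h.choose else v with hp
  have hp_mem : ∀ v : Fin n, (G.neighborFinset v).Nonempty → p v ∈ G.neighborFinset v := by
    intro v h
    simp only [hp, dif_pos h]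
    exact h.choose_spec
  have hNsing : ∀ v : Fin n, G.degree v = 1 → G.neighborFinset v = {p v} := by
    intro v hd
    have hcard : (G.neighborFinset v).card = 1 := by
      rw [G.card_neighborFinset_eq_degree, hd]
    obtain ⟨a, ha⟩ := Finset.card_eq_one.mp hcard
    have hne : (G.neighborFinset v).Nonempty := ⟨a, ha ▸ Finset.mem_singleton_self a⟩
    have := hp_mem v hne
    rw [ha] at this ⊢
    rw [Finset.mem_singleton] at this
    rw [this]
  set M : Finset (Fin n) := (Finset.univ \ C).filter (fun v => G.degree v = 1) with hM
  have hMmem : ∀ v, v ∈ M ↔ (v ∉ C ∧ G.degree v = 1) := by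
    intro v; simp [hM, Finset.mem_sdiff]
  have hpM : ∀ v ∈ M, G.Adj v (p v) ∧ p v ∈ M ∧ p (p v) = v := by
    intro v hv
    obtain ⟨hvC, hvd⟩ := (hMmem v).mp hv
    have hN := hNsing v hvd
    have hadj : G.Adj v (p v) := by
      rw [← SimpleGraph.mem_neighborFinset, hN]; exact Finset.mem_singleton_self _
    have hpC : p v ∉ C := fun h => hvC (hclosed (p v) h v hadj.symm)
    have hdp : G.degree (p v) = 1 := by
      have h1 : 1 ≤ G.degree (p v) := by
        rw [← G.card_neighborFinset_eq_degree]
        exact Finset.card_pos.mpr ⟨v, (SimpleGraph.mem_neighborFinset _ _ _).mpr hadj.symm⟩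
      exact le_antisymm (hdeg1 _ hpC) h1
    have hNp := hNsing (p v) hdp
    have hvmem : v ∈ G.neighborFinset (p v) := (SimpleGraph.mem_neighborFinset _ _ _).mpr hadj.symm
    rw [hNp, Finset.mem_singleton] at hvmem
    exact ⟨hadj, (hMmem _).mpr ⟨hpC, hdp⟩, hvmem.symm⟩
  set P : Finset (Fin n) := M.filter (fun v => v < p v) with hP
  set k := P.card with hk
  have hpinjP : ∀ u ∈ P, ∀ v ∈ P, p u = p v → u = v := by
    intro u hu v hv h
    have hu' := (hpM u (Finset.mem_of_mem_filter _ hu)).2.2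
    have hv' := (hpM v (Finset.mem_of_mem_filter _ hv)).2.2
    rw [← hu', h, hv']
  have hM2k : M.card = 2 * k := by
    have htri : ∀ v ∈ M, (p v < v ↔ ¬ v < p v) := by
      intro v hv
      have := (hpM v hv).1.ne
      constructor
      · intro h1 h2; exact absurd (lt_trans h1 h2) (lt_irrefl (p v))
      · intro h1
        rcases lt_trichotomy v (p v) with h | h | h
        · exact absurd h h1
        · exact absurd h this
        · exact h
    have hsplit : P.card + (M.filter (fun v => ¬ v < p v)).card = M.card :=
      Finset.card_filter_add_card_filter_not (s := M) (p := fun v => v < p v)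
    have hQ : M.filter (fun v => ¬ v < p v) = P.image p := by
      ext x
      constructor
      · intro hx
        rw [Finset.mem_filter] at hx
        obtain ⟨hxM, hlt⟩ := hx
        rw [Finset.mem_image]
        refine ⟨p x, ?_, (hpM x hxM).2.2⟩
        rw [hP, Finset.mem_filter]
        refine ⟨(hpM x hxM).2.1, ?_⟩
        rw [(hpM x hxM).2.2]
        exact (htri x hxM).mpr hlt
      · intro hx
        rw [Finset.mem_image] at hx
        obtain ⟨y, hy, rfl⟩ := hx
        rw [hP, Finset.mem_filter] at hy
        obtain ⟨hyM, hylt⟩ := hy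
        rw [Finset.mem_filter]
        refine ⟨(hpM y hyM).2.1, (htri (p y) (hpM y hyM).2.1).mp ?_⟩
        rw [(hpM y hyM).2.2]
        exact hylt
    have hcardQ : (P.image p).card = k := Finset.card_image_of_injOn hpinjP
    rw [hQ, hcardQ] at hsplit
    omega
  have hMsub : M ⊆ Finset.univ \ C := Finset.filter_subset _ _
  have hRcard : (Finset.univ \ C).card = n - m := by
    rw [Finset.card_sdiff_of_subset (Finset.subset_univ C), hCcard, Finset.card_univ, Fintype.card_fin]
  have hsumM : ∑ v ∈ Finset.univ \ C, G.degree v = M.card := by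
    rw [← Finset.sum_filter_add_sum_filter_not (Finset.univ \ C) (fun v => G.degree v = 1)]
    have h2 : ∑ v ∈ (Finset.univ \ C).filter (fun v => ¬ G.degree v = 1), G.degree v = 0 := by
      apply Finset.sum_eq_zero
      intro v hv
      simp only [Finset.mem_filter, Finset.mem_sdiff, Finset.mem_univ] at hv
      have := hdeg1 v hv.1.2
      omega
    have h1 : ∑ v ∈ M, G.degree v = M.card := by
      rw [Finset.sum_congr rfl (fun v hv => ((hMmem v).mp hv).2)]
      simp
    rw [h1, h2, add_zero]
  have h2kr : 2 * k ≤ n - m := by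
    rw [← hM2k, ← hRcard]
    exact Finset.card_le_card hMsub
  have hdegC : ∀ v ∈ C, G.degree v ≤ m - 1 := by
    intro v hv
    rw [← G.card_neighborFinset_eq_degree]
    have hsub : G.neighborFinset v ⊆ C.erase v := by
      intro w hw
      rw [SimpleGraph.mem_neighborFinset] at hw
      exact Finset.mem_erase.mpr ⟨hw.ne', hclosed v hv w hw⟩
    calc (G.neighborFinset v).card ≤ (C.erase v).card := Finset.card_le_card hsub
      _ = m - 1 := by rw [Finset.card_erase_of_mem hv, hCcard]
  have hSC : ∑ v ∈ C, G.degree v ≤ m * (m - 1) := by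
    calc ∑ v ∈ C, G.degree v ≤ C.card • (m - 1) := Finset.sum_le_card_nsmul C _ _ hdegC
      _ = m * (m - 1) := by rw [hCcard, smul_eq_mul]
  have hsplit2 : ∑ v ∈ Finset.univ \ C, G.degree v + ∑ v ∈ C, G.degree v
      = ∑ v : Fin n, G.degree v := Finset.sum_sdiff (Finset.subset_univ C)
  have hSRle : ∑ v ∈ Finset.univ \ C, G.degree v ≤ 2 * ((n - m)/2) := by
    rw [hsumM, hM2k]; omega
  have hSCeq : ∑ v ∈ C, G.degree v = m * (m - 1) := by omega
  have hdegCfull : ∀ v ∈ C, G.degree v = m - 1 := by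
    by_contra hcon
    push_neg at hcon
    obtain ⟨v, hv, hvne⟩ := hcon
    have hlt : ∑ v ∈ C, G.degree v < ∑ _v ∈ C, (m - 1) :=
      Finset.sum_lt_sum hdegC ⟨v, hv, lt_of_le_of_ne (hdegC v hv) hvne⟩
    rw [Finset.sum_const, hCcard, smul_eq_mul] at hlt
    omega
  have hclique : ∀ u ∈ C, ∀ v ∈ C, u ≠ v → G.Adj u v := by
    intro u hu v hv huv
    have hsub : G.neighborFinset u ⊆ C.erase u := by
      intro w hw
      rw [SimpleGraph.mem_neighborFinset] at hw
      exact Finset.mem_erase.mpr ⟨hw.ne', hclosed u hu w hw⟩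
    have heq : G.neighborFinset u = C.erase u := by
      apply Finset.eq_of_subset_of_card_le hsub
      rw [Finset.card_erase_of_mem hu, hCcard, G.card_neighborFinset_eq_degree,
        hdegCfull u hu]
    rw [← SimpleGraph.mem_neighborFinset, heq]
    exact Finset.mem_erase.mpr ⟨huv.symm, hv⟩
  have hklow : 2 * ((n - m)/2) ≤ 2 * k := by
    rw [← hM2k, ← hsumM]; omega
  set U : Finset (Fin n) := (Finset.univ \ C) \ M with hU
  have hUcard : U.card = (n - m) - 2 * k := by
    rw [hU, Finset.card_sdiff_of_subset hMsub, hRcard, hM2k]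
  have hUone : U.card ≤ 1 := by omega
  have hUmem : ∀ v, v ∈ U ↔ (v ∉ C ∧ v ∉ M) := by
    intro v; simp [hU, Finset.mem_sdiff]
  -- the map
  set g : Fin n → ℕ := fun v =>
    if v ∈ C then rk C v
    else if v ∈ M then (if v < p v then m + 2 * rk P v else m + 2 * rk P (p v) + 1)
    else n - 1 with hg
  have hgCdef : ∀ v ∈ C, g v = rk C v := by
    intro v hv; simp only [hg, if_pos hv]
  have hgPdef : ∀ v, v ∉ C → v ∈ M → v < p v → g v = m + 2 * rk P v := by
    intro v h1 h2 h3; simp only [hg, if_neg h1, if_pos h2, if_pos h3]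
  have hgQdef : ∀ v, v ∉ C → v ∈ M → ¬ v < p v → g v = m + 2 * rk P (p v) + 1 := by
    intro v h1 h2 h3; simp only [hg, if_neg h1, if_pos h2, if_neg h3]
  have hgUdef : ∀ v, v ∉ C → v ∉ M → g v = n - 1 := by
    intro v h1 h2; simp only [hg, if_neg h1, if_neg h2]
  have hrkC : ∀ v ∈ C, rk C v < m := fun v hv => hCcard ▸ rk_lt_card hv
  have hrkP : ∀ v ∈ P, rk P v < k := fun v hv => rk_lt_card hv
  have hMhi : ∀ v ∈ M, ¬ v < p v → p v ∈ P := by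
    intro v hv hlt
    rw [hP, Finset.mem_filter]
    refine ⟨(hpM v hv).2.1, ?_⟩
    rw [(hpM v hv).2.2]
    rcases lt_trichotomy v (p v) with h | h | h
    · exact absurd h hlt
    · exact absurd h (hpM v hv).1.ne
    · exact h
  have hgM_bound : ∀ v ∈ M, m ≤ g v ∧ g v < m + 2 * k := by
    intro v hv
    have hvC := ((hMmem v).mp hv).1
    by_cases hlt : v < p v
    · rw [hgPdef v hvC hv hlt]
      have : v ∈ P := by rw [hP, Finset.mem_filter]; exact ⟨hv, hlt⟩
      have := hrkP v this
      omega
    · rw [hgQdef v hvC hv hlt]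
      have := hrkP _ (hMhi v hv hlt)
      omega
  have hglt : ∀ v, g v < n := by
    intro v
    by_cases hvC : v ∈ C
    · rw [hgCdef v hvC]
      exact lt_of_lt_of_le (hrkC v hvC) hmn
    · by_cases hvM : v ∈ M
      · have := (hgM_bound v hvM).2
        have := hmlt v hvC
        omega
      · rw [hgUdef v hvC hvM]
        have := hmlt v hvC
        omega
  have hg_ge : ∀ v, v ∉ C → m ≤ g v := by
    intro v hvC
    by_cases hvM : v ∈ M
    · exact (hgM_bound v hvM).1
    · rw [hgUdef v hvC hvM]
      have := hmlt v hvC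
      omega
  have hgC_lt : ∀ v ∈ C, g v < m := by
    intro v hv; rw [hgCdef v hv]; exact hrkC v hv
  have hgU : ∀ v, v ∈ U → g v = n - 1 ∧ (n - m) = 2 * k + 1 := by
    intro v hv
    obtain ⟨hvC, hvM⟩ := (hUmem v).mp hv
    have h1 : 1 ≤ U.card := Finset.card_pos.mpr ⟨v, hv⟩
    exact ⟨hgUdef v hvC hvM, by omega⟩
  -- injectivity
  have hg_inj : ∀ u v : Fin n, g u = g v → u = v := by
    intro u v h
    by_cases huC : u ∈ C <;> by_cases hvC : v ∈ C
    · rw [hgCdef u huC, hgCdef v hvC] at h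
      exact rk_inj huC hvC h
    · exact absurd h (by have := hgC_lt u huC; have := hg_ge v hvC; omega)
    · exact absurd h (by have := hgC_lt v hvC; have := hg_ge u huC; omega)
    · by_cases huM : u ∈ M <;> by_cases hvM : v ∈ M
      · by_cases hu1 : u < p u <;> by_cases hv1 : v < p v
        · rw [hgPdef u huC huM hu1, hgPdef v hvC hvM hv1] at h
          exact rk_inj (S := P) (by rw [hP, Finset.mem_filter]; exact ⟨huM, hu1⟩)
            (by rw [hP, Finset.mem_filter]; exact ⟨hvM, hv1⟩) (by omega)
        · rw [hgPdef u huC huM hu1, hgQdef v hvC hvM hv1] at h; omega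
        · rw [hgQdef u huC huM hu1, hgPdef v hvC hvM hv1] at h; omega
        · rw [hgQdef u huC huM hu1, hgQdef v hvC hvM hv1] at h
          have : p u = p v := rk_inj (S := P) (hMhi u huM hu1) (hMhi v hvM hv1) (by omega)
          rw [← (hpM u huM).2.2, this, (hpM v hvM).2.2]
      · obtain ⟨hgv, hodd⟩ := hgU v ((hUmem v).mpr ⟨hvC, hvM⟩)
        have := (hgM_bound u huM).2
        have := hmlt u huC
        omega
      · obtain ⟨hgu, hodd⟩ := hgU u ((hUmem u).mpr ⟨huC, huM⟩)
        have := (hgM_bound v hvM).2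
        have := hmlt v hvC
        omega
      · have hu' := (hUmem u).mpr ⟨huC, huM⟩
        have hv' := (hUmem v).mpr ⟨hvC, hvM⟩
        exact Finset.card_le_one.mp hUone u hu' v hv'
  set f : Fin n → Fin n := fun v => ⟨g v, hglt v⟩ with hf
  have hf_inj : Function.Injective f := by
    intro u v h
    exact hg_inj u v (congrArg Fin.val h)
  have hval : ∀ v, ((f v : Fin n) : ℕ) = g v := fun v => rfl
  -- neighbor identification
  have hnbr : ∀ u v : Fin n, u ∉ C → G.Adj u v → (u ∈ M ∧ v = p u) := by
    intro u v huC hadj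
    have hd : G.degree u = 1 := by
      have h1 : 1 ≤ G.degree u := by
        rw [← G.card_neighborFinset_eq_degree]
        exact Finset.card_pos.mpr ⟨v, (SimpleGraph.mem_neighborFinset _ _ _).mpr hadj⟩
      exact le_antisymm (hdeg1 _ huC) h1
    have huM : u ∈ M := (hMmem u).mpr ⟨huC, hd⟩
    have := hNsing u hd
    have hv : v ∈ G.neighborFinset u := (SimpleGraph.mem_neighborFinset _ _ _).mpr hadj
    rw [this, Finset.mem_singleton] at hv
    exact ⟨huM, hv⟩
  -- adjacency iff
  have hadj_iff : ∀ u v : Fin n, (compPlusMatching n m).Adj (f u) (f v) ↔ G.Adj u v := by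
    intro u v
    constructor
    · rintro ⟨hne', hcase⟩
      have hne : u ≠ v := fun h => hne' (congrArg f h)
      rw [hval, hval] at hcase
      rcases hcase with ⟨h1, h2⟩ | ⟨h1, h2, h3⟩
      · have huC : u ∈ C := by by_contra h; exact absurd h1 (by have := hg_ge u h; omega)
        have hvC : v ∈ C := by by_contra h; exact absurd h2 (by have := hg_ge v h; omega)
        exact hclique u huC v hvC hne
      · have huC : u ∉ C := fun h => by have := hgC_lt u h; omega
        have hvC : v ∉ C := fun h => by have := hgC_lt v h; omega
        by_cases huM : u ∈ M <;> by_cases hvM : v ∈ M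
        · by_cases hu1 : u < p u <;> by_cases hv1 : v < p v
          · rw [hgPdef u huC huM hu1, hgPdef v hvC hvM hv1] at h3
            have : u = v := rk_inj (S := P) (by rw [hP, Finset.mem_filter]; exact ⟨huM, hu1⟩)
              (by rw [hP, Finset.mem_filter]; exact ⟨hvM, hv1⟩) (by omega)
            exact absurd this hne
          · rw [hgPdef u huC huM hu1, hgQdef v hvC hvM hv1] at h3
            have : u = p v := rk_inj (S := P) (by rw [hP, Finset.mem_filter]; exact ⟨huM, hu1⟩)
              (hMhi v hvM hv1) (by omega)
            rw [this]
            exact (hpM v hvM).1.symm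
          · rw [hgQdef u huC huM hu1, hgPdef v hvC hvM hv1] at h3
            have : p u = v := rk_inj (S := P) (hMhi u huM hu1)
              (by rw [hP, Finset.mem_filter]; exact ⟨hvM, hv1⟩) (by omega)
            rw [← this]
            exact (hpM u huM).1
          · rw [hgQdef u huC huM hu1, hgQdef v hvC hvM hv1] at h3
            have : p u = p v := rk_inj (S := P) (hMhi u huM hu1) (hMhi v hvM hv1) (by omega)
            have : u = v := by rw [← (hpM u huM).2.2, this, (hpM v hvM).2.2]
            exact absurd this hne
        · obtain ⟨hgv, hodd⟩ := hgU v ((hUmem v).mpr ⟨hvC, hvM⟩)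
          have := hmlt u huC
          exfalso
          rw [hgv] at h3
          by_cases hu1 : u < p u
          · rw [hgPdef u huC huM hu1] at h3
            have := hrkP u (by rw [hP, Finset.mem_filter]; exact ⟨huM, hu1⟩)
            omega
          · rw [hgQdef u huC huM hu1] at h3
            have := hrkP _ (hMhi u huM hu1)
            omega
        · obtain ⟨hgu, hodd⟩ := hgU u ((hUmem u).mpr ⟨huC, huM⟩)
          have := hmlt v hvC
          exfalso
          rw [hgu] at h3
          by_cases hv1 : v < p v
          · rw [hgPdef v hvC hvM hv1] at h3
            have := hrkP v (by rw [hP, Finset.mem_filter]; exact ⟨hvM, hv1⟩)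
            omega
          · rw [hgQdef v hvC hvM hv1] at h3
            have := hrkP _ (hMhi v hvM hv1)
            omega
        · have hu' := (hUmem u).mpr ⟨huC, huM⟩
          have hv' := (hUmem v).mpr ⟨hvC, hvM⟩
          exact absurd (Finset.card_le_one.mp hUone u hu' v hv') hne
    · intro hadj
      refine ⟨fun h => hadj.ne (hf_inj h), ?_⟩
      rw [hval, hval]
      by_cases huC : u ∈ C
      · left
        exact ⟨hgC_lt u huC, hgC_lt v (hclosed u huC v hadj)⟩
      · obtain ⟨huM, rfl⟩ := hnbr u _ huC hadj
        right
        have hpuM := (hpM u huM).2.1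
        have hpuC := ((hMmem _).mp hpuM).1
        refine ⟨hg_ge u huC, hg_ge _ hpuC, ?_⟩
        have hppu := (hpM u huM).2.2
        by_cases hu1 : u < p u
        · have hnlt : ¬ p u < p (p u) := by
            rw [hppu]; exact fun h => absurd (lt_trans hu1 h) (lt_irrefl u)
          rw [hgPdef u huC huM hu1, hgQdef (p u) hpuC hpuM hnlt, hppu]
          omega
        · have hlt' : p u < p (p u) := by
            rw [hppu]
            rcases lt_trichotomy u (p u) with h | h | h
            · exact absurd h hu1
            · exact absurd h (hpM u huM).1.ne
            · exact h
          rw [hgQdef u huC huM hu1, hgPdef (p u) hpuC hpuM hlt']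
          omega
  exact ⟨⟨Equiv.ofBijective f ((Finite.injective_iff_bijective).mp hf_inj),
    fun {a b} => hadj_iff a b⟩⟩
end iso

lemma choose_two_eq (l : ℕ) : Nat.choose (2*l+3) 2 = (2*l+3)*(l+1) := by
  rw [Nat.choose_two_right]
  rw [show 2*l+3-1 = 2*(l+1) by omega]
  rw [show (2*l+3) * (2*(l+1)) = ((2*l+3)*(l+1))*2 by ring]
  exact Nat.mul_div_cancel _ (by norm_num)

lemma case1 {l n : ℕ} (hl : 2 ≤ l) (hn : 2*l+3 ≤ n) (G : SimpleGraph (Fin n))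
    [DecidableRel G.Adj]
    (E : Fin (2*l+3) ↪ Fin n) (hE : ∀ a b, (cycleGraph (2*l+3)).Adj a b → G.Adj (E a) (E b))
    (he : Nat.choose (2*l+3) 2 + (n - (2*l+3))/2 ≤ G.edgeFinset.card)
    (hT : ¬ ContainsSub G (pathUnion 2 ![2*l+1, 3])) :
    Nonempty (G ≃g compPlusMatching n (2*l+3)) := by
  have hm0 : 0 < 2*l+3 := by omega
  have hm3 : 3 ≤ 2*l+3 := by omega
  set cc : ℕ → Fin n := ccf E hm0 with hcc
  have hadjcc : ∀ i, G.Adj (cc i) (cc (i+1)) := ccf_adj G E hm0 hm3 hE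
  have hccinj : ∀ s t t', t < 2*l+3 → t' < 2*l+3 → cc (s+t) = cc (s+t') → t = t' := by
    intro s t t' h1 h2 h
    have := (ccf_shift_iff E hm0 s t t').mp h
    rwa [Nat.mod_eq_of_lt h1, Nat.mod_eq_of_lt h2] at this
  set C : Finset (Fin n) := Finset.univ.image (fun t : Fin (2*l+3) => E t) with hCdef
  have hCcard : C.card = 2*l+3 := by
    rw [hCdef, Finset.card_image_of_injective _ E.injective, Finset.card_univ,
      Fintype.card_fin]
  have hccC : ∀ i, cc i ∈ C := by
    intro i
    rw [hCdef, Finset.mem_image]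
    exact ⟨⟨i % (2*l+3), Nat.mod_lt _ hm0⟩, Finset.mem_univ _, rfl⟩
  have hEcc : ∀ t : Fin (2*l+3), E t = cc t.val := by
    intro t
    rw [hcc]
    unfold ccf
    congr 1
    exact Fin.ext (by simp [Nat.mod_eq_of_lt t.isLt])
  have hCcc : ∀ v ∈ C, ∃ i, i < 2*l+3 ∧ cc i = v := by
    intro v hv
    rw [hCdef, Finset.mem_image] at hv
    obtain ⟨t, -, rfl⟩ := hv
    exact ⟨t.val, t.isLt, (hEcc t).symm⟩
  -- no edges from the cycle to the outside
  have hcross : ∀ i u, u ∉ C → ¬ G.Adj (cc i) u := by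
    intro i u hu hadj
    apply hT
    apply build_target G (fun t => cc (i+2+t)) (bfun u (cc i) (cc (i+1)))
    · intro t t' ht ht' h
      exact hccinj (i+2) t t' (by omega) (by omega) h
    · apply bfun_inj
      · exact fun h => hu (h ▸ hccC i)
      · exact fun h => hu (h ▸ hccC (i+1))
      · intro h
        have : (0:ℕ) = 1 := hccinj i 0 1 (by omega) (by omega) (by simpa using h)
        omega
    · intro t ht
      have := hadjcc (i+2+t)
      rwa [show i+2+t+1 = i+2+(t+1) by omega] at this
    · exact bfun_adj G hadj.symm (hadjcc i)
    · intro t j ht hj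
      interval_cases j
      · rw [bfun_zero]
        exact fun h => hu (h ▸ hccC (i+2+t))
      · rw [bfun_one]
        intro h
        rw [show i+2+t = i+(2+t) by omega, show (i:ℕ) = i + 0 by omega] at h
        have := hccinj i (2+t) 0 (by omega) (by omega) h
        omega
      · rw [bfun_two]
        intro h
        rw [show i+2+t = i+(2+t) by omega, show i + 1 = i + 1 from rfl] at h
        have := hccinj i (2+t) 1 (by omega) (by omega) h
        omega
  have hclosed : ∀ u ∈ C, ∀ v, G.Adj u v → v ∈ C := by
    intro u hu v hadj
    by_contra hv
    obtain ⟨i, -, rfl⟩ := hCcc u hu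
    exact hcross i v hv hadj
  have h1deg : ∀ v, v ∉ C → G.degree v ≤ 1 := by
    intro v hv
    by_contra h
    push_neg at h
    rw [← G.card_neighborFinset_eq_degree] at h
    obtain ⟨x, hx, y, hy, hxy⟩ := Finset.one_lt_card.mp h
    rw [SimpleGraph.mem_neighborFinset] at hx hy
    have hxC : x ∉ C := by
      intro hc
      obtain ⟨i, -, rfl⟩ := hCcc x hc
      exact hcross i v hv hx.symm
    have hyC : y ∉ C := by
      intro hc
      obtain ⟨i, -, rfl⟩ := hCcc y hc
      exact hcross i v hv hy.symm
    apply hT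
    apply build_target G (fun t => cc t) (bfun x v y)
    · intro t t' ht ht' h'
      have := hccinj 0 t t' (by omega) (by omega) (by rwa [Nat.zero_add, Nat.zero_add])
      exact this
    · exact bfun_inj hx.ne' (hxy) (hy.ne)
    · intro t ht; exact hadjcc t
    · exact bfun_adj G hx.symm hy
    · intro t j ht hj
      interval_cases j
      · rw [bfun_zero]; exact fun h' => hxC (h' ▸ hccC t)
      · rw [bfun_one]; exact fun h' => hv (h' ▸ hccC t)
      · rw [bfun_two]; exact fun h' => hyC (h' ▸ hccC t)
  -- counting
  have hcount : (2*l+3) * ((2*l+3) - 1) + 2 * ((n - (2*l+3))/2)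
      ≤ ∑ v : Fin n, G.degree v := by
    rw [SimpleGraph.sum_degrees_eq_twice_card_edges]
    rw [choose_two_eq l] at he
    have h1 : (2*l+3) * ((2*l+3) - 1) = 2*((2*l+3)*(l+1)) := by
      rw [show (2*l+3) - 1 = 2*l+2 by omega]; ring
    omega
  exact iso_construct G C hCcard hclosed h1deg hcount

lemma case2 {l n : ℕ} (hl : 2 ≤ l) (hn : 2*l+3 ≤ n) (G : SimpleGraph (Fin n))
    [DecidableRel G.Adj]
    (E : Fin (2*l+2) ↪ Fin n) (hE : ∀ a b, (cycleGraph (2*l+2)).Adj a b → G.Adj (E a) (E b))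
    (he : Nat.choose (2*l+3) 2 + (n - (2*l+3))/2 ≤ G.edgeFinset.card)
    (hT : ¬ ContainsSub G (pathUnion 2 ![2*l+1, 3]))
    (hC3 : ¬ ContainsSub G (cycleGraph (2*l+3))) : False := by
  have hm0 : 0 < 2*l+2 := by omega
  have hm3 : 3 ≤ 2*l+2 := by omega
  set cc : ℕ → Fin n := ccf E hm0 with hcc
  have hadjcc : ∀ i, G.Adj (cc i) (cc (i+1)) := ccf_adj G E hm0 hm3 hE
  have hccinj : ∀ s t t', t < 2*l+2 → t' < 2*l+2 → cc (s+t) = cc (s+t') → t = t' := by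
    intro s t t' h1 h2 h
    have := (ccf_shift_iff E hm0 s t t').mp h
    rwa [Nat.mod_eq_of_lt h1, Nat.mod_eq_of_lt h2] at this
  set C : Finset (Fin n) := Finset.univ.image (fun t : Fin (2*l+2) => E t) with hCdef
  have hCcard : C.card = 2*l+2 := by
    rw [hCdef, Finset.card_image_of_injective _ E.injective, Finset.card_univ,
      Fintype.card_fin]
  have hccC : ∀ i, cc i ∈ C := by
    intro i
    rw [hCdef, Finset.mem_image]
    exact ⟨⟨i % (2*l+2), Nat.mod_lt _ hm0⟩, Finset.mem_univ _, rfl⟩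
  have hEcc : ∀ t : Fin (2*l+2), E t = cc t.val := by
    intro t
    rw [hcc]
    unfold ccf
    congr 1
    exact Fin.ext (by simp [Nat.mod_eq_of_lt t.isLt])
  have hCcc : ∀ v ∈ C, ∃ i, i < 2*l+2 ∧ cc i = v := by
    intro v hv
    rw [hCdef, Finset.mem_image] at hv
    obtain ⟨t, -, rfl⟩ := hv
    exact ⟨t.val, t.isLt, (hEcc t).symm⟩
  have hwrap : ∀ j : ℕ, cc (j + (2*l+2)) = cc j := by
    intro j
    rw [hcc]
    exact (ccf_eq_iff E hm0 _ _).mpr (Nat.add_mod_right j (2*l+2))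
  -- Step A: vertices outside C have at most one neighbour outside C
  have hRR : ∀ v, v ∉ C → (G.neighborFinset v \ C).card ≤ 1 := by
    intro v hv
    rw [Finset.card_le_one]
    intro x hx y hy
    rw [Finset.mem_sdiff, SimpleGraph.mem_neighborFinset] at hx hy
    obtain ⟨hax, hxC⟩ := hx
    obtain ⟨hay, hyC⟩ := hy
    by_contra hxy
    apply hT
    apply build_target G (fun t => cc t) (bfun x v y)
    · intro t t' ht ht' h'
      exact hccinj 0 t t' (by omega) (by omega) (by rwa [Nat.zero_add, Nat.zero_add])
    · exact bfun_inj hax.ne' hxy hay.ne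
    · intro t ht; exact hadjcc t
    · exact bfun_adj G hax.symm hay
    · intro t j ht hj
      interval_cases j
      · rw [bfun_zero]; exact fun h' => hxC (h' ▸ hccC t)
      · rw [bfun_one]; exact fun h' => hv (h' ▸ hccC t)
      · rw [bfun_two]; exact fun h' => hyC (h' ▸ hccC t)
  -- Step B: each cycle vertex has at most one neighbour outside C
  have hCR : ∀ i x y, x ∉ C → y ∉ C → G.Adj (cc i) x → G.Adj (cc i) y → x = y := by
    intro i x y hxC hyC hax hay
    by_contra hxy
    apply hT
    apply build_target G (fun t => cc (i+1+t)) (bfun x (cc i) y)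
    · intro t t' ht ht' h
      exact hccinj (i+1) t t' (by omega) (by omega) h
    · apply bfun_inj
      · exact fun h => hxC (h ▸ hccC i)
      · exact hxy
      · exact fun h => hyC (h.symm ▸ hccC i)
    · intro t ht
      have := hadjcc (i+1+t)
      rwa [show i+1+t+1 = i+1+(t+1) by omega] at this
    · exact bfun_adj G hax.symm hay
    · intro t j ht hj
      interval_cases j
      · rw [bfun_zero]; exact fun h => hxC (h ▸ hccC (i+1+t))
      · rw [bfun_one]
        intro h
        rw [show i+1+t = i+(1+t) by omega, show (i:ℕ) = i + 0 by omega] at h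
        have := hccinj i (1+t) 0 (by omega) (by omega) h
        omega
      · rw [bfun_two]; exact fun h => hyC (h ▸ hccC (i+1+t))
  -- Step C: no two consecutive cycle vertices both have outside neighbours
  have hcons : ∀ j : ℕ, ¬ ((∃ u, u ∉ C ∧ G.Adj (cc j) u) ∧
      (∃ v, v ∉ C ∧ G.Adj (cc (j+1)) v)) := by
    rintro j ⟨⟨u, huC, hu⟩, ⟨v, hvC, hv⟩⟩
    by_cases huv : u = v
    · -- build a (2l+3)-cycle, contradicting hC3
      subst huv
      apply hC3
      set f : Fin (2*l+3) → Fin n :=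
        fun t => if (t:ℕ) = 0 then u else cc (j + (t:ℕ)) with hfdef
      have hf0 : ∀ t : Fin (2*l+3), (t:ℕ) = 0 → f t = u := by
        intro t ht; simp only [hfdef]; rw [if_pos ht]
      have hfp : ∀ t : Fin (2*l+3), (t:ℕ) ≠ 0 → f t = cc (j + (t:ℕ)) := by
        intro t ht; simp only [hfdef]; rw [if_neg ht]
      have finj : Function.Injective f := by
        intro s t h
        by_cases hs : (s:ℕ) = 0 <;> by_cases ht : (t:ℕ) = 0
        · exact Fin.ext (by omega)
        · rw [hf0 s hs, hfp t ht] at h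
          exact absurd (h ▸ hccC (j + (t:ℕ))) huC
        · rw [hfp s hs, hf0 t ht] at h
          exact absurd (h.symm ▸ hccC (j + (s:ℕ))) huC
        · rw [hfp s hs, hfp t ht] at h
          have hmod := (ccf_shift_iff E hm0 j _ _).mp h
          have hslt := s.isLt; have htlt := t.isLt
          by_cases hs2 : (s:ℕ) = 2*l+2 <;> by_cases ht2 : (t:ℕ) = 2*l+2
          · exact Fin.ext (by omega)
          · rw [hs2, Nat.mod_self, Nat.mod_eq_of_lt (by omega)] at hmod
            omega
          · rw [ht2, Nat.mod_self, Nat.mod_eq_of_lt (by omega)] at hmod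
            omega
          · rw [Nat.mod_eq_of_lt (by omega), Nat.mod_eq_of_lt (by omega)] at hmod
            exact Fin.ext hmod
      refine ⟨⟨f, finj⟩, ?_⟩
      intro a b hab
      show G.Adj (f a) (f b)
      rw [cycle_adj_iff (by omega)] at hab
      have halt := a.isLt; have hblt := b.isLt
      have key : ∀ a b : Fin (2*l+3), (a:ℕ) + 1 = (b:ℕ) → G.Adj (f a) (f b) := by
        intro a b h
        by_cases ha : (a:ℕ) = 0
        · rw [hf0 a ha, hfp b (by omega)]
          rw [show j + (b:ℕ) = j + 1 by omega]
          exact hv.symm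
        · rw [hfp a ha, hfp b (by omega)]
          have := hadjcc (j + (a:ℕ))
          rwa [show j + (a:ℕ) + 1 = j + (b:ℕ) by omega] at this
      rcases hab with h | h | ⟨h1, h2⟩ | ⟨h1, h2⟩
      · exact key a b h
      · exact (key b a h).symm
      · rw [hf0 b (by omega), hfp a (by omega)]
        rw [show j + (a:ℕ) = j + (2*l+2) by omega, hwrap j]
        exact hu
      · rw [hf0 a (by omega), hfp b (by omega)]
        rw [show j + (b:ℕ) = j + (2*l+2) by omega, hwrap j]
        exact hu.symm
    · -- build the target directly
      apply hT
      apply build_target G (fun t => if t = 0 then v else cc (j + t))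
        (bfun u (cc j) (cc (j + (2*l+1))))
      · intro t t' ht ht' h
        by_cases h0 : t = 0 <;> by_cases h0' : t' = 0
        · omega
        · rw [if_pos h0, if_neg h0'] at h
          exact absurd (h ▸ hccC (j + t')) hvC
        · rw [if_neg h0, if_pos h0'] at h
          exact absurd (h.symm ▸ hccC (j + t)) hvC
        · rw [if_neg h0, if_neg h0'] at h
          exact hccinj j t t' (by omega) (by omega) h
      · apply bfun_inj
        · exact fun h => huC (h ▸ hccC j)
        · exact fun h => huC (h ▸ hccC (j + (2*l+1)))
        · intro h
          rw [show (j:ℕ) = j + 0 by omega] at h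
          have := hccinj j 0 (2*l+1) (by omega) (by omega) h
          omega
      · intro t ht
        by_cases h0 : t = 0
        · subst h0
          rw [if_pos rfl, if_neg (by omega : ¬(0:ℕ)+1 = 0)]
          rw [show j + (0+1) = j + 1 by omega]
          exact hv.symm
        · rw [if_neg h0, if_neg (by omega : ¬t+1 = 0)]
          have := hadjcc (j + t)
          rwa [show j + t + 1 = j + (t+1) by omega] at this
      · apply bfun_adj G hu.symm
        have := hadjcc (j + (2*l+1))
        rw [show j + (2*l+1) + 1 = j + (2*l+2) by omega, hwrap j] at this
        exact this.symm
      · intro t j' ht hj'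
        by_cases h0 : t = 0
        · subst h0
          rw [if_pos rfl]
          interval_cases j'
          · rw [bfun_zero]; exact fun h => huv h.symm
          · rw [bfun_one]; exact fun h => hvC (h ▸ hccC j)
          · rw [bfun_two]; exact fun h => hvC (h ▸ hccC (j + (2*l+1)))
        · rw [if_neg h0]
          interval_cases j'
          · rw [bfun_zero]; exact fun h => huC (h ▸ hccC (j + t))
          · rw [bfun_one]
            intro h
            rw [show (j:ℕ) = j + 0 by omega] at h
            have := hccinj j t 0 (by omega) (by omega) h
            omega
          · rw [bfun_two]
            intro h
            have := hccinj j t (2*l+1) (by omega) (by omega) h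
            omega
  -- counting
  have hNsplit : ∀ v : Fin n, G.degree v =
      (G.neighborFinset v ∩ C).card + (G.neighborFinset v \ C).card := by
    intro v
    rw [← G.card_neighborFinset_eq_degree]
    exact (Finset.card_inter_add_card_sdiff _ _).symm
  have hswap : ∑ v ∈ C, (G.neighborFinset v \ C).card
      = ∑ w ∈ Finset.univ \ C, (G.neighborFinset w ∩ C).card := by
    have h1 : ∀ v : Fin n, G.neighborFinset v \ C
        = (Finset.univ \ C).filter (fun w => G.Adj v w) := by
      intro v
      ext w
      simp only [Finset.mem_sdiff, Finset.mem_filter, Finset.mem_univ,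
        SimpleGraph.mem_neighborFinset, true_and]
      tauto
    have h2 : ∀ w : Fin n, G.neighborFinset w ∩ C
        = C.filter (fun v => G.Adj v w) := by
      intro w
      ext v
      simp only [Finset.mem_inter, Finset.mem_filter,
        SimpleGraph.mem_neighborFinset]
      constructor
      · intro ⟨ha, hb⟩; exact ⟨hb, ha.symm⟩
      · intro ⟨ha, hb⟩; exact ⟨hb.symm, ha⟩
    calc ∑ v ∈ C, (G.neighborFinset v \ C).card
        = ∑ v ∈ C, ∑ w ∈ Finset.univ \ C, if G.Adj v w then 1 else 0 := by
          exact Finset.sum_congr rfl fun v _ => by rw [h1 v, Finset.card_filter]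
      _ = ∑ w ∈ Finset.univ \ C, ∑ v ∈ C, if G.Adj v w then 1 else 0 :=
          Finset.sum_comm
      _ = ∑ w ∈ Finset.univ \ C, (G.neighborFinset w ∩ C).card := by
          exact Finset.sum_congr rfl fun w _ => by rw [h2 w, Finset.card_filter]
  have hF1 : ∀ i : ℕ, (G.neighborFinset (cc i) \ C).card ≤ 1 := by
    intro i
    rw [Finset.card_le_one]
    intro x hx y hy
    rw [Finset.mem_sdiff, SimpleGraph.mem_neighborFinset] at hx hy
    exact hCR i x y hx.2 hy.2 hx.1 hy.1
  -- X = number of cross edges, bounded by l+1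
  have hXfin : ∑ v ∈ C, (G.neighborFinset v \ C).card
      = ∑ t : Fin (2*l+2), (G.neighborFinset (cc (t:ℕ)) \ C).card := by
    rw [hCdef, Finset.sum_image (fun x _ y _ h => E.injective h)]
    exact Finset.sum_congr rfl fun t _ => by rw [hEcc t]
  have hXle : ∑ t : Fin (2*l+2), (G.neighborFinset (cc (t:ℕ)) \ C).card ≤ l+1 := by
    set T := Finset.univ.filter
      (fun t : Fin (2*l+2) => (G.neighborFinset (cc (t:ℕ)) \ C).card = 1) with hTdef
    have hXT : ∑ t : Fin (2*l+2), (G.neighborFinset (cc (t:ℕ)) \ C).card = T.card := by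
      rw [← Finset.sum_filter_add_sum_filter_not Finset.univ
        (fun t : Fin (2*l+2) => (G.neighborFinset (cc (t:ℕ)) \ C).card = 1)]
      have hzero : ∑ t ∈ Finset.univ.filter
          (fun t : Fin (2*l+2) => ¬(G.neighborFinset (cc (t:ℕ)) \ C).card = 1),
          (G.neighborFinset (cc (t:ℕ)) \ C).card = 0 := by
        apply Finset.sum_eq_zero
        intro t ht
        have := hF1 (t:ℕ)
        have := (Finset.mem_filter.mp ht).2
        omega
      have hone : ∑ t ∈ T, (G.neighborFinset (cc (t:ℕ)) \ C).card = T.card := by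
        rw [Finset.sum_congr rfl (fun t ht => (Finset.mem_filter.mp ht).2)]
        simp [hTdef]
      rw [hone, hzero, add_zero]
    rw [hXT]
    have hmaps : ∀ t ∈ T, (t:ℕ)/2 ∈ Finset.range (l+1) := by
      intro t _
      rw [Finset.mem_range]
      have := t.isLt
      omega
    have hcle : T.card ≤ (Finset.range (l+1)).card := by
      apply Finset.card_le_card_of_injOn (fun t : Fin (2*l+2) => (t:ℕ)/2) hmaps
      intro s hs t ht hst
      by_contra hne
      have hsv : (s:ℕ) ≠ (t:ℕ) := fun h => hne (Fin.ext h)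
      simp only at hst
      have hgetS : ∃ x, x ∉ C ∧ G.Adj (cc (s:ℕ)) x := by
        have h1 := (Finset.mem_filter.mp hs).2
        obtain ⟨x, hx⟩ := Finset.card_eq_one.mp h1
        have : x ∈ G.neighborFinset (cc (s:ℕ)) \ C := hx ▸ Finset.mem_singleton_self x
        rw [Finset.mem_sdiff, SimpleGraph.mem_neighborFinset] at this
        exact ⟨x, this.2, this.1⟩
      have hgetT : ∃ x, x ∉ C ∧ G.Adj (cc (t:ℕ)) x := by
        have h1 := (Finset.mem_filter.mp ht).2
        obtain ⟨x, hx⟩ := Finset.card_eq_one.mp h1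
        have : x ∈ G.neighborFinset (cc (t:ℕ)) \ C := hx ▸ Finset.mem_singleton_self x
        rw [Finset.mem_sdiff, SimpleGraph.mem_neighborFinset] at this
        exact ⟨x, this.2, this.1⟩
      rcases (by omega : (t:ℕ) = (s:ℕ) + 1 ∨ (s:ℕ) = (t:ℕ) + 1) with h | h
      · exact hcons (s:ℕ) ⟨hgetS, h ▸ hgetT⟩
      · exact hcons (t:ℕ) ⟨hgetT, h ▸ hgetS⟩
    rwa [Finset.card_range] at hcle
  -- degree bounds
  have hdegCin : ∀ v ∈ C, (G.neighborFinset v ∩ C).card ≤ 2*l+1 := by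
    intro v hv
    have hsub : G.neighborFinset v ∩ C ⊆ C.erase v := by
      intro w hw
      rw [Finset.mem_inter, SimpleGraph.mem_neighborFinset] at hw
      exact Finset.mem_erase.mpr ⟨hw.1.ne', hw.2⟩
    calc (G.neighborFinset v ∩ C).card ≤ (C.erase v).card := Finset.card_le_card hsub
      _ = 2*l+1 := by rw [Finset.card_erase_of_mem hv, hCcard]; omega
  have hSC : ∑ v ∈ C, G.degree v
      ≤ (2*l+2)*(2*l+1) + ∑ v ∈ C, (G.neighborFinset v \ C).card := by
    calc ∑ v ∈ C, G.degree v
        = ∑ v ∈ C, ((G.neighborFinset v ∩ C).card + (G.neighborFinset v \ C).card) :=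
          Finset.sum_congr rfl fun v _ => hNsplit v
      _ = ∑ v ∈ C, (G.neighborFinset v ∩ C).card
          + ∑ v ∈ C, (G.neighborFinset v \ C).card := Finset.sum_add_distrib
      _ ≤ (2*l+2)*(2*l+1) + ∑ v ∈ C, (G.neighborFinset v \ C).card := by
          have : ∑ v ∈ C, (G.neighborFinset v ∩ C).card ≤ C.card • (2*l+1) :=
            Finset.sum_le_card_nsmul C _ _ hdegCin
          rw [hCcard, smul_eq_mul] at this
          omega
  have hRcard : (Finset.univ \ C).card = n - (2*l+2) := by
    rw [Finset.card_sdiff_of_subset (Finset.subset_univ C), hCcard, Finset.card_univ,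
      Fintype.card_fin]
  have hSR : ∑ w ∈ Finset.univ \ C, G.degree w
      ≤ (∑ v ∈ C, (G.neighborFinset v \ C).card) + (n - (2*l+2)) := by
    calc ∑ w ∈ Finset.univ \ C, G.degree w
        = ∑ w ∈ Finset.univ \ C,
            ((G.neighborFinset w ∩ C).card + (G.neighborFinset w \ C).card) :=
          Finset.sum_congr rfl fun w _ => hNsplit w
      _ = ∑ w ∈ Finset.univ \ C, (G.neighborFinset w ∩ C).card
          + ∑ w ∈ Finset.univ \ C, (G.neighborFinset w \ C).card :=
          Finset.sum_add_distrib
      _ ≤ (∑ v ∈ C, (G.neighborFinset v \ C).card) + (n - (2*l+2)) := by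
          have h1 : ∑ w ∈ Finset.univ \ C, (G.neighborFinset w \ C).card
              ≤ (Finset.univ \ C).card • 1 := by
            apply Finset.sum_le_card_nsmul
            intro w hw
            exact hRR w (Finset.mem_sdiff.mp hw).2
          rw [hRcard, smul_eq_mul, mul_one] at h1
          rw [hswap]
          omega
  have htotal : ∑ v ∈ Finset.univ \ C, G.degree v + ∑ v ∈ C, G.degree v
      = 2 * G.edgeFinset.card := by
    rw [Finset.sum_sdiff (Finset.subset_univ C)]
    exact G.sum_degrees_eq_twice_card_edges
  rw [choose_two_eq l] at he
  have hX : ∑ v ∈ C, (G.neighborFinset v \ C).card ≤ l + 1 := by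
    rw [hXfin]; exact hXle
  have hrel : 2*((2*l+3)*(l+1)) = (2*l+2)*(2*l+1) + (4*l+4) := by ring
  omega

theorem statement11 (l n : ℕ) (hl : 2 ≤ l) (hn : 2 * l + 3 ≤ n)
    (G : SimpleGraph (Fin n))
    (hne : ¬ Nonempty (G ≃g compPlusMatching n (2 * l + 3)))
    (he : Nat.choose (2 * l + 3) 2 + (n - (2 * l + 3)) / 2 ≤ G.edgeSet.ncard)
    (hcyc : ContainsSub G (SimpleGraph.cycleGraph (2 * l + 2)) ∨
        ContainsSub G (SimpleGraph.cycleGraph (2 * l + 3))) :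
    ContainsSub G (pathUnion 2 ![2 * l + 1, 3]) := by
  classical
  have hE : Nat.choose (2*l+3) 2 + (n - (2*l+3))/2 ≤ G.edgeFinset.card := by
    rwa [Set.ncard_eq_toFinset_card' G.edgeSet] at he
  by_contra hT
  have hcase1 : ContainsSub G (cycleGraph (2*l+3)) → False := by
    rintro ⟨f, hf⟩
    exact hne (case1 hl hn G f hf hE hT)
  rcases hcyc with ⟨f, hf⟩ | h3
  · by_cases h3 : ContainsSub G (cycleGraph (2*l+3))
    · exact hcase1 h3
    · exact case2 hl hn G f hf hE hT h3
  · exact hcase1 h3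
end

section
/- Let k_1 ≥ k_m ≥ 3 be integers with at most one of k_1, k_m odd, and let n ≥ k_1 + k_m. Then max{ C(k_1+k_m-2,2) + n - k_1 - k_m + 2, [n, k_1+k_m] } ≤ max{ [n, k_1+k_m, k_m], [n, k_1+k_m] }. -/
open SimpleGraph Finset

lemma two_mul_choose_two (x : ℕ) : 2 * Nat.choose x 2 = x * (x - 1) := by
  induction x with
  | zero => rfl
  | succ n ih =>
    rw [Nat.choose_succ_succ, Nat.choose_one_right, Nat.mul_add, ih]
    simp only [Nat.add_sub_cancel]
    cases n with
    | zero => rfl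
    | succ k => simp only [Nat.add_sub_cancel]; ring

lemma choose_two_ge (r : ℕ) : r ≤ Nat.choose r 2 + 1 := by
  induction r with
  | zero => simp
  | succ n ih => rw [Nat.choose_succ_succ, Nat.choose_one_right]; omega

lemma choose_two_succ (x : ℕ) : Nat.choose (x + 1) 2 = Nat.choose x 2 + x := by
  rw [Nat.choose_succ_succ, Nat.choose_one_right, Nat.add_comm]

lemma le_choose_two (l : ℕ) (hl : 3 ≤ l) : l ≤ Nat.choose l 2 := by
  have h := two_mul_choose_two l
  nlinarith [Nat.mul_le_mul_left l (show 2 ≤ l - 1 by omega)]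

theorem statement13 (k1 km n : ℕ) (h1 : km ≤ k1) (h3 : 3 ≤ km)
    (hodd : ¬ (Odd k1 ∧ Odd km)) (hn : k1 + km ≤ n) :
    max (Nat.choose (k1 + km - 2) 2 + (n - k1 - km) + 2) (brkt2 n (k1 + km)) ≤
      max (brkt3 n (k1 + km) km) (brkt2 n (k1 + km)) := by
  rw [max_le_iff]
  refine ⟨?_, le_max_right _ _⟩
  obtain ⟨m, hm⟩ : ∃ m, m = k1 + km := ⟨_, rfl⟩
  rw [show k1 + km = m from hm.symm]
  have hm6 : 6 ≤ m := by omega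
  have hneg : ¬ n ≤ m - 1 := by omega
  have hcc : Nat.choose (m - 1) 2 = Nat.choose (m - 2) 2 + (m - 2) := by
    have e : m - 1 = (m - 2) + 1 := by omega
    rw [e, choose_two_succ]
  by_cases hkm4 : 4 ≤ km
  · -- use brkt3
    refine le_trans ?_ (le_max_left _ _)
    unfold brkt3
    rw [if_neg hneg]
    set N := n - (m - 1) with hN
    set l := km - 1 with hl
    have hl3 : 3 ≤ l := by omega
    have hdm : l * (N / l) + N % l = N := Nat.div_add_mod N l
    have h3r := choose_two_ge (N % l)
    have h5 : N ≤ N / l * Nat.choose l 2 + N % l := by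
      calc N = l * (N / l) + N % l := hdm.symm
        _ ≤ N / l * Nat.choose l 2 + N % l := by
            refine Nat.add_le_add_right ?_ _
            rw [Nat.mul_comm]
            exact Nat.mul_le_mul_left _ (le_choose_two l hl3)
    exact Nat.le_of_lt_succ (by omega)
  · -- km = 3
    have hkm3 : km = 3 := by omega
    have hk1e : ¬ Odd k1 := fun h => hodd ⟨h, by rw [hkm3]; decide⟩
    have hk1even : k1 % 2 = 0 := Nat.even_iff.mp (Nat.not_odd_iff_even.mp hk1e)
    have hm7 : 7 ≤ m := by omega
    have hmodd : m % 2 = 1 := by omega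
    by_cases hsmall : n ≤ 3 * m - 7
    · -- use brkt3
      refine le_trans ?_ (le_max_left _ _)
      unfold brkt3
      rw [if_neg hneg, hkm3]
      have hC1 : Nat.choose (3 - 1 : ℕ) 2 = 1 := by decide
      rw [hC1]
      have hdm : 2 * ((n - (m - 1)) / 2) + (n - (m - 1)) % 2 = n - (m - 1) :=
        Nat.div_add_mod _ 2
      have hr : (n - (m - 1)) % 2 < 2 := Nat.mod_lt _ (by omega)
      have hr0 : Nat.choose ((n - (m - 1)) % 2) 2 = 0 := by
        interval_cases h : (n - (m - 1)) % 2 <;> decide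
      simp only [show (3 - 1 : ℕ) = 2 from rfl, mul_one]
      exact Nat.le_of_lt_succ (by omega)
    · -- use brkt2
      refine le_trans ?_ (le_max_right _ _)
      unfold brkt2
      set q := m / 2 with hq
      have hqm : m = 2 * q + 1 := by omega
      have hq3 : 3 ≤ q := by omega
      have hq2 : (m - 2) / 2 = q - 1 := by omega
      rw [hq2]
      have e1 := two_mul_choose_two (m - 2)
      have e2 := two_mul_choose_two (q - 1)
      have hnn : 3 * m - 6 ≤ n := by omega
      have key : 2 * (Nat.choose (m - 2) 2 + (n - m) + 2) ≤
          2 * (Nat.choose (q - 1) 2 + (q - 1) * (n - q + 1)) := by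
        have hnq : q ≤ n := by omega
        have hmn : m ≤ n := by omega
        zify [hmn, hnq, (by omega : 2 ≤ m), (by omega : 3 ≤ m),
          (by omega : 1 ≤ q), (by omega : 2 ≤ q), (by omega : 1 ≤ m - 2),
          (by omega : 1 ≤ q - 1)] at e1 e2 ⊢
        nlinarith [e1, e2, (by omega : (6:ℤ) * q - 3 ≤ n), (by omega : (3:ℤ) ≤ q)]
      omega
end

section
/- Let k_1 ≥ k_m ≥ 3 be integers with at most one of k_1, k_m odd, and let n_1 ≥ k_1 and n_2 ≥ 0. Then [n_1, k_1+k_m, k_m] + [n_2, k_m, k_m] ≤ [n_1+n_2, k_1+k_m, k_m]. -/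
open SimpleGraph Finset

def gfun (L n : ℕ) : ℕ := (n / L) * Nat.choose L 2 + Nat.choose (n % L) 2

lemma two_choose (n : ℕ) : 2 * n.choose 2 + n = n * n := by
  induction n with
  | zero => rfl
  | succ k ih =>
    have : (k+1).choose 2 = k.choose 1 + k.choose 2 := Nat.choose_succ_succ k 1
    simp [this, Nat.choose_one_right] at *
    nlinarith [ih]

lemma cineq1 (x y : ℕ) : x.choose 2 + y.choose 2 ≤ (x+y).choose 2 := by
  have h1 := two_choose x
  have h2 := two_choose y
  have h3 := two_choose (x+y)
  nlinarith [h1, h2, h3]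

lemma cineq2 (L x y : ℕ) (hx : x < L) (hy : y < L) (hs : L ≤ x + y) :
    x.choose 2 + y.choose 2 ≤ L.choose 2 + (x+y-L).choose 2 := by
  have h1 := two_choose x
  have h2 := two_choose y
  have h3 := two_choose L
  have h4 := two_choose (x+y-L)
  have he : x + y - L + L = x + y := Nat.sub_add_cancel hs
  -- cast to integers
  zify [hs] at *
  nlinarith [mul_nonneg (by omega : (0:ℤ) ≤ (x:ℤ) - ((x:ℤ)+(y:ℤ)-(L:ℤ))) (by omega : (0:ℤ) ≤ (L:ℤ) - (x:ℤ))]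

lemma choose_add_ge (n d : ℕ) : n.choose 2 + d * n ≤ (n+d).choose 2 := by
  have h1 := two_choose n
  have h2 := two_choose d
  have h3 := two_choose (n+d)
  nlinarith [h1, h2, h3]

lemma g_succ (L : ℕ) (hL : 0 < L) (y : ℕ) : gfun L (y+1) = gfun L y + y % L := by
  have hm : y % L < L := Nat.mod_lt _ hL
  have hy : y = y % L + L * (y / L) := (Nat.mod_add_div y L).symm
  rcases Nat.lt_or_ge (y % L + 1) L with h | h
  · have hd : (y+1) / L = y / L := by
      conv_lhs => rw [hy]
      rw [show y % L + L * (y / L) + 1 = (y % L + 1) + L * (y / L) by ring,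
        Nat.add_mul_div_left _ _ hL, Nat.div_eq_of_lt h, Nat.zero_add]
    have hmm : (y+1) % L = y % L + 1 := by
      conv_lhs => rw [hy]
      rw [show y % L + L * (y / L) + 1 = (y % L + 1) + L * (y / L) by ring,
        Nat.add_mul_mod_self_left, Nat.mod_eq_of_lt h]
    rw [gfun, gfun, hd, hmm, Nat.choose_succ_succ, Nat.choose_one_right]
    ring
  · have hL1 : y % L + 1 = L := by omega
    have hd : (y+1) / L = y / L + 1 := by
      conv_lhs => rw [hy]
      rw [show y % L + L * (y / L) + 1 = L * (y / L + 1) from by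
        have e : L * (y / L + 1) = L * (y / L) + L := by ring
        omega, Nat.mul_div_cancel_left _ hL]
    have hmm : (y+1) % L = 0 := by
      conv_lhs => rw [hy]
      rw [show y % L + L * (y / L) + 1 = 0 + L * (y / L + 1) from by
        have e : L * (y / L + 1) = L * (y / L) + L := by ring
        omega,
        Nat.add_mul_mod_self_left, Nat.zero_mod]
    rw [gfun, gfun, hd, hmm]
    have hc : L.choose 2 = (y % L).choose 2 + y % L := by
      conv_lhs => rw [← hL1]
      rw [Nat.choose_succ_succ, Nat.choose_one_right]; ring
    simp [hc]; ring

lemma g_superadd (L : ℕ) (hL : 0 < L) (a b : ℕ) :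
    gfun L a + gfun L b ≤ gfun L (a+b) := by
  have ha : a = a % L + L * (a / L) := (Nat.mod_add_div a L).symm
  have hb : b = b % L + L * (b / L) := (Nat.mod_add_div b L).symm
  have hma : a % L < L := Nat.mod_lt _ hL
  have hmb : b % L < L := Nat.mod_lt _ hL
  rcases Nat.lt_or_ge (a % L + b % L) L with h | h
  · have hd : (a+b) / L = a / L + b / L := by
      conv_lhs => rw [ha, hb]
      rw [show a % L + L * (a / L) + (b % L + L * (b / L)) =
        (a % L + b % L) + L * (a / L + b / L) by ring,
        Nat.add_mul_div_left _ _ hL, Nat.div_eq_of_lt h, Nat.zero_add]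
    have hm : (a+b) % L = a % L + b % L := by
      conv_lhs => rw [ha, hb]
      rw [show a % L + L * (a / L) + (b % L + L * (b / L)) =
        (a % L + b % L) + L * (a / L + b / L) by ring,
        Nat.add_mul_mod_self_left, Nat.mod_eq_of_lt h]
    rw [gfun, gfun, gfun, hd, hm]
    have := cineq1 (a % L) (b % L)
    nlinarith [this]
  · have hd : (a+b) / L = a / L + b / L + 1 := by
      conv_lhs => rw [ha, hb]
      rw [show a % L + L * (a / L) + (b % L + L * (b / L)) =
        (a % L + b % L - L) + L * (a / L + b / L + 1) from by
          have e : L * (a / L + b / L + 1) = L * (a / L) + L * (b / L) + L := by ring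
          omega,
        Nat.add_mul_div_left _ _ hL, Nat.div_eq_of_lt (by omega), Nat.zero_add]
    have hm : (a+b) % L = a % L + b % L - L := by
      conv_lhs => rw [ha, hb]
      rw [show a % L + L * (a / L) + (b % L + L * (b / L)) =
        (a % L + b % L - L) + L * (a / L + b / L + 1) from by
          have e : L * (a / L + b / L + 1) = L * (a / L) + L * (b / L) + L := by ring
          omega,
        Nat.add_mul_mod_self_left, Nat.mod_eq_of_lt (by omega)]
    rw [gfun, gfun, gfun, hd, hm]
    have := cineq2 L (a % L) (b % L) hma hmb h
    nlinarith [this]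

lemma g_lin (L : ℕ) (hL : 0 < L) (x d : ℕ) : gfun L (x+d) ≤ gfun L x + d * (L-1) := by
  induction d with
  | zero => simp
  | succ k ih =>
    rw [show x + (k+1) = (x+k) + 1 by ring, g_succ L hL]
    have : (x+k) % L ≤ L - 1 := by have := Nat.mod_lt (x+k) hL; omega
    have : gfun L (x+k) + (x+k) % L ≤ gfun L x + k * (L-1) + (L-1) := by omega
    calc gfun L (x+k) + (x+k) % L ≤ gfun L x + k * (L-1) + (L-1) := this
      _ = gfun L x + (k+1) * (L-1) := by ring

lemma g_small (L : ℕ) (hL : 0 < L) (n : ℕ) (h : n ≤ L) : gfun L n = n.choose 2 := by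
  rcases Nat.lt_or_ge n L with h' | h'
  · rw [gfun, Nat.div_eq_of_lt h', Nat.mod_eq_of_lt h']; ring
  · have : n = L := le_antisymm h h'
    subst this
    rw [gfun, Nat.div_self hL, Nat.mod_self]; simp

lemma brkt3_eq (n m l : ℕ) : brkt3 n m l = (min n (m-1)).choose 2 + gfun (l-1) (n - (m-1)) := by
  rw [brkt3]
  rcases le_or_gt n (m-1) with h | h
  · rw [if_pos h, min_eq_left h, Nat.sub_eq_zero_of_le h]
    simp [gfun]
  · rw [if_neg (by omega), min_eq_right (by omega), gfun]; ring

lemma g_shift (L : ℕ) (hL : 0 < L) (x : ℕ) : gfun L (x + L) = L.choose 2 + gfun L x := by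
  rw [gfun, gfun, Nat.add_div_right _ hL, Nat.add_mod_right]; ring

lemma brkt3_self (n l : ℕ) (hl : 2 ≤ l) : brkt3 n l l = gfun (l-1) n := by
  set L := l - 1 with hLdef
  have hL : 0 < L := by omega
  rw [brkt3]
  rcases le_or_gt n L with h | h
  · rw [if_pos h, g_small L hL n h]
  · rw [if_neg (by omega)]
    have : n = (n - L) + L := by omega
    rw [this, g_shift L hL, Nat.add_sub_cancel, gfun]; ring

theorem statement14 (k1 km n1 n2 : ℕ) (h1 : km ≤ k1) (h3 : 3 ≤ km)
    (hodd : ¬ (Odd k1 ∧ Odd km)) (hn1 : k1 ≤ n1) :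
    brkt3 n1 (k1 + km) km + brkt3 n2 km km ≤ brkt3 (n1 + n2) (k1 + km) km := by
  set L := km - 1 with hLdef
  have hL : 0 < L := by omega
  set M := k1 + km - 1 with hMdef
  rw [brkt3_self n2 km (by omega),
    show brkt3 n1 (k1+km) km = (min n1 M).choose 2 + gfun L (n1 - M) from brkt3_eq _ _ _,
    show brkt3 (n1+n2) (k1+km) km = (min (n1+n2) M).choose 2 + gfun L (n1+n2 - M) from
      brkt3_eq _ _ _]
  simp only [← hLdef, ← hMdef]
  rcases le_or_gt M n1 with h | h
  · rw [min_eq_right h, min_eq_right (by omega)]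
    have : n1 + n2 - M = (n1 - M) + n2 := by omega
    rw [this]
    have := g_superadd L hL (n1 - M) n2
    omega
  · rw [min_eq_left (le_of_lt h), Nat.sub_eq_zero_of_le (le_of_lt h)]
    have hg0 : gfun L 0 = 0 := by simp [gfun]
    rcases le_or_gt (n1 + n2) M with h2 | h2
    · rw [min_eq_left h2, Nat.sub_eq_zero_of_le h2, hg0]
      have hn2 : n2 ≤ L := by omega
      rw [g_small L hL n2 hn2]
      have := cineq1 n1 n2
      omega
    · rw [min_eq_right (le_of_lt h2)]
      set c := n1 + n2 - M with hcdef
      set d := M - n1 with hddef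
      have hn2 : n2 = c + d := by omega
      rw [hn2]
      have hlin : gfun L (c + d) ≤ gfun L c + d * (L - 1) := g_lin L hL c d
      have hch : n1.choose 2 + d * n1 ≤ (n1 + d).choose 2 := choose_add_ge n1 d
      have hMd : M = n1 + d := by omega
      have hdn : d * (L - 1) ≤ d * n1 := Nat.mul_le_mul_left d (by omega)
      rw [hMd]
      omega
end

section
/- Let k_1 ≥ k_2 ≥ k_m ≥ 3 be integers with at most one of k_1, k_2, k_m odd, and let n_1 ≥ k_1 + k_m and n_2 ≥ k_2 + k_m. Then [n_1, k_1+k_m] + [n_2, k_2+k_m] < [n_1+n_2, k_1+k_2+k_m]. -/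
open SimpleGraph Finset

lemma key (h1 h2 H n1 n2 : ℤ) (ha : 3 ≤ h1) (hb : 3 ≤ h2) (hc : h1+1 ≤ H) (hd : h2+1 ≤ H)
    (he : H ≤ h1+h2) (hf : 2*h1 ≤ n1) (hg : 2*h2 ≤ n2) :
    (h1-1)*(2*n1-h1) + (h2-1)*(2*n2-h2) < (H-1)*(2*(n1+n2)-H) := by
  nlinarith [mul_nonneg (sub_nonneg.2 hc) (sub_nonneg.2 hg),
    mul_nonneg (sub_nonneg.2 hd) (sub_nonneg.2 hf),
    sq_nonneg (H - h1 - 1), sq_nonneg (H - h2 - 1)]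

lemma two_brkt2 (n m : ℕ) (h2 : 2 ≤ m / 2) (hn : m / 2 ≤ n) :
    2 * brkt2 n m = (m / 2 - 1) * (2 * n - m / 2) := by
  obtain ⟨a, ha⟩ : ∃ a, m / 2 = a + 2 := ⟨m / 2 - 2, by omega⟩
  obtain ⟨b, hb⟩ : ∃ b, n = a + 2 + b := ⟨n - (a + 2), by omega⟩
  have hm2 : (m - 2) / 2 = a + 1 := by omega
  rw [brkt2, ha, hb, hm2, Nat.choose_two_right]
  have h1 : a + 2 - 1 = a + 1 := rfl
  have h2 : (a + 1) * (a + 1 - 1) = (a + 1) * a := rfl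
  rw [h1, h2]
  have he : 2 * ((a + 1) * a / 2) = (a + 1) * a := by
    rw [Nat.two_mul_div_two_of_even]
    rw [mul_comm]; exact Nat.even_mul_succ_self a
  have : a + 2 + b - (a + 2) + 1 = b + 1 := by omega
  rw [this, Nat.mul_add, he]
  have : 2 * (a + 2 + b) - (a + 2) = a + 2 * b + 2 := by omega
  rw [this]; ring

theorem statement16 (k1 k2 km n1 n2 : ℕ) (h12 : k2 ≤ k1) (h2m : km ≤ k2) (h3 : 3 ≤ km)
    (hodd : (if Odd k1 then 1 else 0) + (if Odd k2 then 1 else 0) +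
        (if Odd km then 1 else 0) ≤ 1)
    (hn1 : k1 + km ≤ n1) (hn2 : k2 + km ≤ n2) :
    brkt2 n1 (k1 + km) + brkt2 n2 (k2 + km) < brkt2 (n1 + n2) (k1 + k2 + km) := by
  have hodd' : k1 % 2 + k2 % 2 + km % 2 ≤ 1 := by
    simp only [Nat.odd_iff] at hodd
    split_ifs at hodd <;> omega
  set h1 := (k1 + km) / 2 with hh1
  set h2 := (k2 + km) / 2 with hh2
  set H := (k1 + k2 + km) / 2 with hH
  have f1 : 3 ≤ h1 := by omega
  have f2 : 3 ≤ h2 := by omega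
  have f3 : h1 + 1 ≤ H := by omega
  have f4 : h2 + 1 ≤ H := by omega
  have f5 : H ≤ h1 + h2 := by omega
  have f6 : 2 * h1 ≤ n1 := by omega
  have f7 : 2 * h2 ≤ n2 := by omega
  have e1 := two_brkt2 n1 (k1 + km) (by omega) (by omega)
  have e2 := two_brkt2 n2 (k2 + km) (by omega) (by omega)
  have e3 := two_brkt2 (n1 + n2) (k1 + k2 + km) (by omega) (by omega)
  have goal2 : 2 * brkt2 n1 (k1 + km) + 2 * brkt2 n2 (k2 + km)
      < 2 * brkt2 (n1 + n2) (k1 + k2 + km) := by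
    rw [← hh1] at e1
    rw [← hh2] at e2
    rw [← hH] at e3
    clear_value h1 h2 H
    rw [e1, e2, e3]
    have := key (h1 : ℤ) h2 H n1 n2 (by exact_mod_cast f1) (by exact_mod_cast f2)
      (by exact_mod_cast f3) (by exact_mod_cast f4) (by exact_mod_cast f5)
      (by exact_mod_cast f6) (by exact_mod_cast f7)
    zify [show h1 ≤ 2 * n1 by omega, show h2 ≤ 2 * n2 by omega,
      show H ≤ 2 * (n1 + n2) by omega, show 1 ≤ h1 by omega, show 1 ≤ h2 by omega,
      show 1 ≤ H by omega]
    push_cast at this ⊢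
    linarith
  omega
end

section
/- Let k_1 ≥ k_2 ≥ k_m ≥ 3 be integers with at most one of k_1, k_2, k_m odd, and let n_1 ≥ k_1 + k_m and n_2 ≥ k_2. Then [n_1, k_1+k_m] + [n_2, k_2+k_m, k_m] < [n_1+n_2, k_1+k_2+k_m]. -/
open SimpleGraph Finset

lemma two_choose_two (k : ℕ) : 2 * Nat.choose k 2 = k * (k - 1) := by
  rcases k with _ | j
  · rfl
  · rw [Nat.choose_two_right, Nat.succ_sub_one, mul_comm (j+1) j,
      Nat.mul_div_cancel' (Nat.even_mul_succ_self j).two_dvd]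

lemma brkt3_le (n m l : ℕ) (hl : 3 ≤ l) :
    2 * brkt3 n m l ≤ (m-1)*(m-2) + (n - (m-1))*(l-2) := by
  unfold brkt3
  split_ifs with h
  · rw [two_choose_two, Nat.sub_eq_zero_of_le h, zero_mul, add_zero]
    exact Nat.mul_le_mul h (by omega)
  · push_neg at h
    have hdm : (n - (m-1)) % (l-1) < l - 1 := Nat.mod_lt _ (by omega)
    have hdiv : (n - (m-1)) / (l-1) * (l-1) + (n - (m-1)) % (l-1) = n - (m-1) :=
      by rw [mul_comm]; exact Nat.div_add_mod _ _
    set t := (n - (m-1)) / (l-1)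
    set r := (n - (m-1)) % (l-1)
    rw [mul_add, mul_add, two_choose_two, mul_left_comm, two_choose_two, two_choose_two]
    have h1 : r * (r-1) ≤ r * (l-2) := Nat.mul_le_mul_left r (by omega)
    have h2 : (n - (m-1)) * (l-2) = t*((l-1)*(l-2)) + r*(l-2) := by
      rw [← hdiv]; ring
    have h3 : t*((l-1)*(l-2)) + r*(r-1) ≤ t*((l-1)*(l-2)) + r*(l-2) :=
      Nat.add_le_add_left h1 _
    calc (m-1)*(m-2) + t*((l-1)*(l-2)) + r*(r-1)
        ≤ (m-1)*(m-2) + (t*((l-1)*(l-2)) + r*(l-2)) := by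
          rw [add_assoc]; exact Nat.add_le_add_left h3 _
      _ = (m-1)*(m-2) + (n-(m-1))*(l-2) := by rw [h2]

lemma case1Z (s Q u n2 e c : ℤ) (hQ : 1 ≤ Q) (hc : 2 ≤ c) (he0 : 0 ≤ e) (he1 : e ≤ 1)
    (hdu : s + 1 ≤ u) (hds : 2*Q + e + c ≤ 2*s)
    (hdn : 2*Q + e ≤ n2) (hdn2 : n2 ≤ 2*Q + e + c) :
    n2*(n2-1) + 2 ≤ Q*(2*s+Q-3) + 2*Q*u + 2*(s+Q-1)*(n2-Q) := by
  nlinarith [mul_nonneg (by linarith : (0:ℤ) ≤ Q-1) (by linarith : (0:ℤ) ≤ Q-1),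
    mul_nonneg (by linarith : (0:ℤ) ≤ Q-1) (by linarith : (0:ℤ) ≤ c-2),
    mul_nonneg (by linarith : (0:ℤ) ≤ Q-1) he0,
    mul_nonneg (by linarith : (0:ℤ) ≤ Q-1) (by linarith : (0:ℤ) ≤ u-s-1),
    mul_nonneg (by linarith : (0:ℤ) ≤ Q-1) (by linarith : (0:ℤ) ≤ 2*s-2*Q-e-c),
    mul_nonneg he0 (by linarith : (0:ℤ) ≤ u-s-1),
    mul_nonneg he0 (by linarith : (0:ℤ) ≤ 2*s-2*Q-e-c),
    mul_nonneg he0 (by linarith : (0:ℤ) ≤ 2*Q+e+c-n2),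
    mul_nonneg (by linarith : (0:ℤ) ≤ 1-e) (by linarith : (0:ℤ) ≤ u-s-1),
    mul_nonneg (by linarith : (0:ℤ) ≤ 1-e) (by linarith : (0:ℤ) ≤ 2*s-2*Q-e-c),
    mul_nonneg (by linarith : (0:ℤ) ≤ 1-e) (by linarith : (0:ℤ) ≤ 2*Q+e+c-n2),
    mul_nonneg (by linarith : (0:ℤ) ≤ 2*s-2*Q-e-c) (by linarith : (0:ℤ) ≤ n2-2*Q-e),
    mul_nonneg (by linarith : (0:ℤ) ≤ n2-2*Q-e) (by linarith : (0:ℤ) ≤ 2*Q+e+c-n2)]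

lemma case2Z (s Q u e c w : ℤ) (hQ : 1 ≤ Q) (hc : 2 ≤ c) (he0 : 0 ≤ e) (he1 : e ≤ 1)
    (hdu : s + 1 ≤ u) (hds : 2*Q + e + c ≤ 2*s) (hF2 : 2*Q + e + c + 2*e ≤ 2*s) (hw : 0 ≤ w) :
    (2*Q+e+c)*(2*Q+e+c-1) + w*(c-1) + 2
      ≤ Q*(2*s+Q-3) + 2*Q*u + 2*(s+Q-1)*(w+Q+e+c) := by
  nlinarith [mul_nonneg (by linarith : (0:ℤ) ≤ Q-1) (by linarith : (0:ℤ) ≤ Q-1),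
    mul_nonneg (by linarith : (0:ℤ) ≤ Q-1) (by linarith : (0:ℤ) ≤ c-2),
    mul_nonneg (by linarith : (0:ℤ) ≤ Q-1) he0,
    mul_nonneg (by linarith : (0:ℤ) ≤ Q-1) (by linarith : (0:ℤ) ≤ u-s-1),
    mul_nonneg (by linarith : (0:ℤ) ≤ Q-1) (by linarith : (0:ℤ) ≤ 2*s-2*Q-e-c),
    mul_nonneg (by linarith : (0:ℤ) ≤ Q-1) hw,
    mul_nonneg (by linarith : (0:ℤ) ≤ c-2) he0,
    mul_nonneg (by linarith : (0:ℤ) ≤ c-2) (by linarith : (0:ℤ) ≤ 2*s-2*Q-e-c-2*e),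
    mul_nonneg he0 (by linarith : (0:ℤ) ≤ u-s-1),
    mul_nonneg he0 (by linarith : (0:ℤ) ≤ 2*s-2*Q-e-c),
    mul_nonneg he0 hw,
    mul_nonneg (by linarith : (0:ℤ) ≤ 1-e) (by linarith : (0:ℤ) ≤ u-s-1),
    mul_nonneg (by linarith : (0:ℤ) ≤ 1-e) (by linarith : (0:ℤ) ≤ 2*s-2*Q-e-c),
    mul_nonneg (by linarith : (0:ℤ) ≤ 1-e) hw,
    mul_nonneg (by linarith : (0:ℤ) ≤ 2*s-2*Q-e-c) hw]


theorem statement18 (k1 k2 km n1 n2 : ℕ) (h12 : k2 ≤ k1) (h2m : km ≤ k2) (h3 : 3 ≤ km)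
    (hodd : (if Odd k1 then 1 else 0) + (if Odd k2 then 1 else 0) +
        (if Odd km then 1 else 0) ≤ 1)
    (hn1 : k1 + km ≤ n1) (hn2 : k2 ≤ n2) :
    brkt2 n1 (k1 + km) + brkt3 n2 (k2 + km) km < brkt2 (n1 + n2) (k1 + k2 + km) := by
  have hpar : k1 % 2 + k2 % 2 + km % 2 ≤ 1 := by
    simp only [Nat.odd_iff] at hodd
    split_ifs at hodd <;> omega
  unfold brkt2
  set s1 := (k1+km)/2 with hs1
  set S := (k1+k2+km)/2 with hS
  have e1 : (k1+km-2)/2 = s1 - 1 := by omega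
  have e2 : (k1+k2+km-2)/2 = S - 1 := by omega
  rw [e1, e2]
  obtain ⟨u, hu1, hu2⟩ : ∃ u, n1 - s1 + 1 = u ∧ s1 + 1 ≤ u := ⟨_, rfl, by omega⟩
  obtain ⟨v, hv1, hv2⟩ : ∃ v, n1 + n2 - S + 1 = v ∧ v + S = u + s1 + n2 :=
    ⟨_, rfl, by omega⟩
  rw [hu1, hv1]
  obtain ⟨Q, e, hQe, he1', hQ1, hds⟩ :
      ∃ Q e, (S = s1 + Q ∧ k2 = 2*Q + e) ∧ e ≤ 1 ∧ 1 ≤ Q ∧ 2*Q + e + (km - 1) ≤ 2*s1 :=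
    ⟨S - s1, k2 - 2*(S - s1), ⟨by omega, by omega⟩, by omega, by omega, by omega⟩
  obtain ⟨c, hc1, hc2⟩ : ∃ c, km = c + 1 ∧ 2 ≤ c := ⟨km - 1, by omega, by omega⟩
  have hF2 : 2*Q + e + c + 2*e ≤ 2*s1 := by omega
  have hA := two_choose_two (s1 - 1)
  have hB := two_choose_two (S - 1)
  have eA : s1 - 1 - 1 = s1 - 2 := by omega
  have eB : S - 1 - 1 = S - 2 := by omega
  rw [eA] at hA
  rw [eB] at hB
  have hsge : 3 ≤ s1 := by omega
  have hSge : 4 ≤ S := by omega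
  obtain ⟨hQe1, hQe2⟩ := hQe
  by_cases hcase : n2 ≤ k2 + km - 1
  · -- n2 ≤ k2+km-1 : brkt3 = C(n2,2)
    have hBe : brkt3 n2 (k2+km) km = Nat.choose n2 2 := by
      unfold brkt3; rw [if_pos (by omega)]
    rw [hBe]
    have hn2' : 1 ≤ n2 := by omega
    have hC := two_choose_two n2
    have key := case1Z (s1:ℤ) (Q:ℤ) (u:ℤ) (n2:ℤ) (e:ℤ) (c:ℤ)
      (by exact_mod_cast hQ1) (by exact_mod_cast hc2) (by positivity)
      (by exact_mod_cast he1') (by exact_mod_cast hu2)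
      (by push_cast; omega)
      (by push_cast; omega) (by push_cast; omega)
    have h1 : (1:ℕ) ≤ s1 := by omega
    have h2 : (2:ℕ) ≤ s1 := by omega
    have h4 : (1:ℕ) ≤ S := by omega
    have h5 : (2:ℕ) ≤ S := by omega
    zify [h1, h2, h4, h5, hn2'] at hA hB hC ⊢
    have hvz : (v:ℤ) = (u:ℤ) + n2 - Q := by push_cast; omega
    have hSz : (S:ℤ) = (s1:ℤ) + Q := by push_cast; omega
    rw [hSz] at hB
    rw [hvz, hSz]
    linarith [key, hA, hB, hC]
  · -- n2 ≥ k2+km : use brkt3_le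
    have hb := brkt3_le n2 (k2+km) km h3
    obtain ⟨w, hw1, hw3⟩ : ∃ w, n2 - (k2+km-1) = w ∧ w + (k2+km-1) = n2 :=
      ⟨_, rfl, by omega⟩
    rw [hw1] at hb
    have key := case2Z (s1:ℤ) (Q:ℤ) (u:ℤ) (e:ℤ) (c:ℤ) (w:ℤ)
      (by exact_mod_cast hQ1) (by exact_mod_cast hc2) (by positivity)
      (by exact_mod_cast he1') (by exact_mod_cast hu2)
      (by push_cast; omega) (by push_cast; omega) (by positivity)
    have h1 : (1:ℕ) ≤ s1 := by omega
    have h2 : (2:ℕ) ≤ s1 := by omega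
    have h4 : (1:ℕ) ≤ S := by omega
    have h5 : (2:ℕ) ≤ S := by omega
    have h6 : (1:ℕ) ≤ k2 + km := by omega
    have h7 : (2:ℕ) ≤ k2 + km := by omega
    have h8 : (2:ℕ) ≤ km := by omega
    zify [h1, h2, h4, h5, h6, h7, h8] at hA hB hb ⊢
    have hvz : (v:ℤ) = (u:ℤ) + w + Q + e + c := by push_cast; omega
    have hSz : (S:ℤ) = (s1:ℤ) + Q := by push_cast; omega
    have hk2z : (k2:ℤ) = 2*Q + e := by push_cast; omega
    have hkmz : (km:ℤ) = c + 1 := by push_cast; omega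
    rw [hSz] at hB
    rw [hvz, hSz]
    rw [hk2z, hkmz] at hb
    linarith [key, hA, hB, hb]
end
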